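/- For ν a probability measure on [0,∞) with ν({0}) = δ < 1 and Ψ_ν(z) = ∫ zx/(1−zx) dν(x), if m lies in the left-sided domain of means (m₋(ν), m₀(ν)) and z̃ = ψ_ν(m) = 1/(m + V_ν(m)/m), then Ψ_ν(z̃) = m²/V_ν(m); moreover δ − 1 < m²/V_ν(m) < 0 for all such m. -/

import Mathlib

open MeasureTheory Set Filter Topology ENNReal

noncomputable section

/-- Cauchy-Stieltjes moment-type transform `M_ν(θ) = ∫ 1/(1-θx) dν(x)`. -/
def Mcs (ν : Measure ℝ) (θ : ℝ) : ℝ := ∫ x, 1 / (1 - θ * x) ∂ν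

/-- The mean map `k_ν(θ) = (M_ν(θ) - 1)/(θ M_ν(θ))`. -/
def kcs (ν : Measure ℝ) (θ : ℝ) : ℝ := (Mcs ν θ - 1) / (θ * Mcs ν θ)

/-- The Cauchy transform `G_ν(z) = ∫ 1/(z-x) dν(x)`. -/
def Gcs (ν : Measure ℝ) (z : ℝ) : ℝ := ∫ x, 1 / (z - x) ∂ν

/-- `Ψ_ν(z) = ∫ zx/(1-zx) dν(x)`. -/
def PsiT (ν : Measure ℝ) (z : ℝ) : ℝ := ∫ x, z * x / (1 - z * x) ∂ν

/-- Topological support of a measure on ℝ. -/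
def msupp (ν : Measure ℝ) : Set ℝ := {x | ∀ U ∈ 𝓝 x, ν U ≠ 0}

/-- The natural parameter domain `(θ₋, θ₊) \ {0}`: nonzero `θ` with `θ x < 1` on the support. -/
def ΘDom (ν : Measure ℝ) : Set ℝ := {θ | θ ≠ 0 ∧ ∀ x ∈ msupp ν, θ * x < 1}

/-- Right-sided parameter domain `(0, θ₊)`. -/
def ΘPlus (ν : Measure ℝ) : Set ℝ := {θ | 0 < θ ∧ ∀ x ∈ msupp ν, θ * x < 1}

/-- `ψ_ν`, the inverse of the mean map `k_ν` on the parameter domain. -/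
def ψcs (ν : Measure ℝ) : ℝ → ℝ := Function.invFunOn (kcs ν) (ΘDom ν)

/-- `ψ_ν` for the right-sided family. -/
def ψplus (ν : Measure ℝ) : ℝ → ℝ := Function.invFunOn (kcs ν) (ΘPlus ν)

/-- `ψ_ν` for the left-sided family (measures on `[0,∞)`, parameter `θ < 0`). -/
def ψminus (ν : Measure ℝ) : ℝ → ℝ := Function.invFunOn (kcs ν) (Iio 0)

/-- The pseudo-variance function `𝕍_ν(m) = m (1/ψ_ν(m) - m)`. -/
def pseudoVar (ν : Measure ℝ) (m : ℝ) : ℝ := m * (1 / ψcs ν m - m)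

def pseudoVarMinus (ν : Measure ℝ) (m : ℝ) : ℝ := m * (1 / ψminus ν m - m)

/-- The tilted measure `P_{θ,ν}(dx) = ν(dx)/(M_ν(θ)(1-θx))`. -/
def tilt (ν : Measure ℝ) (θ : ℝ) : Measure ℝ :=
  ν.withDensity (fun x => ENNReal.ofReal (1 / (Mcs ν θ * (1 - θ * x))))

/-- `Q_{m,ν}`, the element of the CSK family with mean `m`. -/
def Qcsk (ν : Measure ℝ) (m : ℝ) : Measure ℝ := tilt ν (ψcs ν m)

def QcskMinus (ν : Measure ℝ) (m : ℝ) : Measure ℝ := tilt ν (ψminus ν m)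

/-- The variance function `V_ν(m) = ∫ (x-m)² dQ_{m,ν}(x)`. -/
def varFun (ν : Measure ℝ) (m : ℝ) : ℝ := ∫ x, (x - m) ^ 2 ∂(Qcsk ν m)

def varFunMinus (ν : Measure ℝ) (m : ℝ) : ℝ := ∫ x, (x - m) ^ 2 ∂(QcskMinus ν m)

/-- Domain of means (two-sided). -/
def meanDom (ν : Measure ℝ) : Set ℝ := kcs ν '' ΘDom ν

/-- Right-sided domain of means `(m₀(ν), m₊(ν))`. -/
def meanDomPlus (ν : Measure ℝ) : Set ℝ := kcs ν '' ΘPlus ν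

/-- Left-sided domain of means `(m₋(ν), m₀(ν))`. -/
def meanDomMinus (ν : Measure ℝ) : Set ℝ := kcs ν '' Iio 0

/-- `χ_ν`, the inverse of `Ψ_ν` on negative reals. -/
def χT (ν : Measure ℝ) : ℝ → ℝ := Function.invFunOn (PsiT ν) (Iio 0)

/-- The S-transform `S_ν(z) = χ_ν(z)(1+z)/z`. -/
def Stransf (ν : Measure ℝ) (z : ℝ) : ℝ := χT ν z * (1 + z) / z

/-- `m₋(ν) = -1/G_ν(0)` for a measure on `[0,∞)`. -/
def mMinus (ν : Measure ℝ) : ℝ := -(Gcs ν 0)⁻¹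

/-- The self-energy (K-transform) `K_ν(z) = z - 1/G_ν(z)`. -/
def KT (ν : Measure ℝ) (z : ℝ) : ℝ := z - 1 / Gcs ν z

/-- A measure is non-degenerate if it is not a Dirac mass. -/
def Nondeg (ν : Measure ℝ) : Prop := ∀ c : ℝ, ν ≠ Measure.dirac c
def pseudoVarPlus (ν : Measure ℝ) (m : ℝ) : ℝ := m * (1 / ψplus ν m - m)

def QcskPlus (ν : Measure ℝ) (m : ℝ) : Measure ℝ := tilt ν (ψplus ν m)

def varFunPlus (ν : Measure ℝ) (m : ℝ) : ℝ := ∫ x, (x - m) ^ 2 ∂(QcskPlus ν m)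

/-- The mean of a measure on `[0,∞)`, as an extended nonnegative real. -/
def m0E (ν : Measure ℝ) : ℝ≥0∞ := ∫⁻ x, ENNReal.ofReal x ∂ν

/-- The Σ-transform `Σ_ν(z) = S_ν(z/(1-z))`. -/
def SigmaT (ν : Measure ℝ) (z : ℝ) : ℝ := Stransf ν (z / (1 - z))

/-- The free Poisson (Marchenko–Pastur) law with density `(1/2π)√((4-x)/x)` on `(0,4)`. -/
def freePoisson : Measure ℝ :=
  volume.withDensity (fun x => ENNReal.ofReal
    (Set.indicator (Ioo 0 4) (fun y => (1/(2*Real.pi)) * Real.sqrt ((4 - y)/y)) x))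

/-- `Ψ_ν(ψ_ν(m)) = m²/𝕍_ν(m)` and `δ - 1 < m²/𝕍_ν(m) < 0` on `(m₋(ν), m₀(ν))`. -/
theorem Psi_pseudoVar (ν : Measure ℝ) [IsProbabilityMeasure ν]
    (hnd : Nondeg ν) (hpos : ν (Iio 0) = 0) (hatom : ν {0} < 1) :
    ∀ m ∈ meanDomMinus ν,
      PsiT ν (1 / (m + pseudoVarMinus ν m / m)) = m ^ 2 / pseudoVarMinus ν m ∧
      (ν {0}).toReal - 1 < m ^ 2 / pseudoVarMinus ν m ∧
      m ^ 2 / pseudoVarMinus ν m < 0 := by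
  intro m hm
  obtain ⟨θ, hθ, hθm⟩ := hm
  have hex : ∃ a ∈ Iio (0:ℝ), kcs ν a = m := ⟨θ, hθ, hθm⟩
  set z := ψminus ν m with hzdef
  have hzlt : z < 0 := Function.invFunOn_mem hex
  have hkz : kcs ν z = m := Function.invFunOn_eq hex
  have hz0 : z ≠ 0 := ne_of_lt hzlt
  -- a.e. nonneg
  have hae : ∀ᵐ x ∂ν, 0 ≤ x := by
    rw [ae_iff]
    convert hpos using 2
    ext x; simp [Iio]
  set M := Mcs ν z with hMdef
  have hden : ∀ x : ℝ, 0 ≤ x → 1 ≤ 1 - z * x := by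
    intro x hx; nlinarith
  have hmeas : Measurable fun x : ℝ => (1 - z * x)⁻¹ :=
    (measurable_const.sub (measurable_id.const_mul z)).inv
  have hint : Integrable (fun x : ℝ => 1 / (1 - z * x)) ν := by
    apply Integrable.mono' (integrable_const (1:ℝ)) (by simpa [one_div] using hmeas.aestronglyMeasurable)
    filter_upwards [hae] with x hx
    have h1 := hden x hx
    rw [Real.norm_eq_abs, abs_of_nonneg (by positivity)]
    rw [div_le_one (by linarith)]; linarith
  have hνIoi : 0 < ν (Ioi 0) := by
    by_contra h
    push_neg at h
    have h0 : ν (Ioi 0) = 0 := le_antisymm (by simpa using h) zero_le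
    have hcompl : ν ({0}ᶜ : Set ℝ) = 0 := by
      have : ({0}ᶜ : Set ℝ) ⊆ Iio 0 ∪ Ioi 0 := by
        intro x hx
        rcases lt_trichotomy x 0 with h|h|h
        · exact Or.inl h
        · exact absurd h hx
        · exact Or.inr h
      refine le_antisymm ?_ zero_le
      calc ν ({0}ᶜ : Set ℝ) ≤ ν (Iio 0 ∪ Ioi 0) := measure_mono this
        _ ≤ ν (Iio 0) + ν (Ioi 0) := measure_union_le _ _
        _ = 0 := by rw [hpos, h0]; simp
    have := measure_compl (μ := ν) (measurableSet_singleton 0) (measure_ne_top _ _)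
    rw [hcompl, measure_univ] at this
    have : ν {0} = 1 := by
      have hle : ν {0} ≤ 1 := prob_le_one
      rcases eq_or_lt_of_le hle with h|h
      · exact h
      · exfalso; rw [eq_comm, tsub_eq_zero_iff_le] at this; exact absurd this (not_le.mpr h)
    exact absurd this (ne_of_lt hatom)
  -- M < 1
  have hMlt1 : M < 1 := by
    have hpos' : 0 < ∫ x, (1 - 1 / (1 - z * x)) ∂ν := by
      rw [integral_pos_iff_support_of_nonneg_ae]
      · refine lt_of_lt_of_le hνIoi (measure_mono ?_)
        intro x hx
        have hx' : (0:ℝ) < x := hx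
        have h1 : (1:ℝ) < 1 - z * x := by nlinarith
        simp only [Function.mem_support]
        intro hc
        have : 1 / (1 - z * x) = 1 := by linarith
        rw [div_eq_one_iff_eq (by linarith)] at this
        linarith
      · filter_upwards [hae] with x hx
        have h1 := hden x hx
        have : 1 / (1 - z * x) ≤ 1 := by rw [div_le_one (by linarith)]; linarith
        simp only [Pi.zero_apply]; linarith
      · exact (integrable_const (1:ℝ)).sub hint
    have : ∫ x, (1 - 1 / (1 - z * x)) ∂ν = 1 - M := by
      rw [integral_sub (integrable_const 1) hint, integral_const]
      simp [hMdef, Mcs]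
    linarith [this ▸ hpos']
  -- M > δ
  have hMgtδ : (ν {0}).toReal < M := by
    have hind : Integrable (fun x : ℝ => Set.indicator ({0}:Set ℝ) (fun _ => (1:ℝ)) x) ν :=
      (integrable_const (1:ℝ)).indicator (measurableSet_singleton 0)
    have hpos' : 0 < ∫ x, (1 / (1 - z * x) - Set.indicator ({0}:Set ℝ) (fun _ => (1:ℝ)) x) ∂ν := by
      rw [integral_pos_iff_support_of_nonneg_ae]
      · refine lt_of_lt_of_le hνIoi (measure_mono ?_)
        intro x hx
        have hx' : (0:ℝ) < x := hx
        have h1 : (1:ℝ) < 1 - z * x := by nlinarith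
        simp only [Function.mem_support]
        rw [Set.indicator_of_notMem (by simp; linarith : x ∉ ({0}:Set ℝ))]
        intro hc
        have hgt : (0:ℝ) < 1 / (1 - z * x) := by positivity
        simp at hc
        linarith
      · filter_upwards [hae] with x hx
        have h1 := hden x hx
        simp only [Pi.zero_apply]
        rcases eq_or_lt_of_le hx with h|h
        · simp [← h]
        · rw [Set.indicator_of_notMem (by simp; linarith : x ∉ ({0}:Set ℝ))]
          have : (0:ℝ) < 1 / (1 - z * x) := by positivity
          linarith
      · exact hint.sub hind
    have heq : ∫ x, (1 / (1 - z * x) - Set.indicator ({0}:Set ℝ) (fun _ => (1:ℝ)) x) ∂ν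
        = M - (ν {0}).toReal := by
      rw [integral_sub hint hind, integral_indicator_const _ (measurableSet_singleton 0)]
      simp [hMdef, Mcs]
      rfl
    linarith [heq ▸ hpos']
  have hM0 : 0 < M := lt_of_le_of_lt ENNReal.toReal_nonneg hMgtδ
  have hMne : M ≠ 0 := ne_of_gt hM0
  -- PsiT ν z = M - 1
  have hPsi : PsiT ν z = M - 1 := by
    have : ∫ x, z * x / (1 - z * x) ∂ν = ∫ x, (1 / (1 - z * x) - 1) ∂ν := by
      apply integral_congr_ae
      filter_upwards [hae] with x hx
      have h1 := hden x hx
      field_simp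
      ring
    rw [PsiT, this, integral_sub hint (integrable_const 1), integral_const]
    simp [hMdef, Mcs]
  -- algebra
  have hm_eq : m * (z * M) = M - 1 := by
    have : (M - 1) / (z * M) = m := hkz
    field_simp at this
    linarith
  have hmne : m ≠ 0 := by
    intro h
    rw [h] at hm_eq
    simp at hm_eq
    linarith
  have hinv : 1 / z - m = 1 / (z * M) := by
    field_simp
    linear_combination (-1) * hm_eq
  have hVeq : pseudoVarMinus ν m = m * (1 / (z * M)) := by
    rw [pseudoVarMinus, ← hzdef, hinv]
  have hVm : pseudoVarMinus ν m / m = 1 / z - m := by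
    rw [pseudoVarMinus, ← hzdef, mul_comm, mul_div_assoc, div_self hmne, mul_one]
  have harg : 1 / (m + pseudoVarMinus ν m / m) = z := by
    rw [hVm]
    have : m + (1 / z - m) = 1 / z := by ring
    rw [this, one_div_one_div]
  have hratio : m ^ 2 / pseudoVarMinus ν m = M - 1 := by
    rw [hVeq, sq, mul_div_mul_left _ _ hmne, div_div_eq_mul_div, div_one]
    exact hm_eq
  refine ⟨?_, ?_, ?_⟩
  · rw [harg, hPsi, hratio]
  · rw [hratio]; linarith
  · rw [hratio]; linarith
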